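/- Let μ = 1 (cubic NLS), α ≠ 0, N a positive integer, j an integer with 0 ≤ j ≤ N, 2j ≠ N, sign(2j − N) = sign(α), and ω > α²/(2j−N)². Then the energy of the stationary state Ψʲ_ω satisfies E[Ψʲ_ω] = −(N/3) ω^{3/2} − α³/(3(2j−N)²). -/

import Mathlib

open MeasureTheory Set Filter

/-- The inverse hyperbolic tangent. -/
noncomputable def arctanh (x : ℝ) : ℝ := (1 / 2) * Real.log ((1 + x) / (1 - x))

/-- The cubic (μ = 1) soliton profile `φ_{ω,a}(x) = √(2ω) sech(√ω (x − a))`. -/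
noncomputable def cubicProfile (ω a : ℝ) (x : ℝ) : ℝ :=
  Real.sqrt (2 * ω) * (1 / Real.cosh (Real.sqrt ω * (x - a)))

noncomputable def th (x : ℝ) : ℝ := Real.sinh x / Real.cosh x

lemma th_hasDerivAt (x : ℝ) : HasDerivAt th (1 / Real.cosh x ^ 2) x := by
  have h := (Real.hasDerivAt_sinh x).div (Real.hasDerivAt_cosh x) (Real.cosh_pos x).ne'
  refine h.congr_deriv ?_
  have := Real.cosh_sq_sub_sinh_sq x
  field_simp
  nlinarith [Real.cosh_pos x]

lemma th_eq_exp (x : ℝ) : th x = (1 - Real.exp (-(2*x))) / (1 + Real.exp (-(2*x))) := by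
  have h2 : Real.exp (-(2*x)) = Real.exp (-x) * Real.exp (-x) := by
    rw [← Real.exp_add]; ring_nf
  have h3 : Real.exp x * Real.exp (-x) = 1 := by
    rw [← Real.exp_add]; simp
  rw [th, Real.sinh_eq, Real.cosh_eq, h2]
  rw [div_eq_div_iff (by positivity) (by positivity)]
  nlinarith [Real.exp_pos x, Real.exp_pos (-x)]

lemma th_neg (x : ℝ) : th (-x) = - th x := by
  simp [th, Real.sinh_neg, Real.cosh_neg, neg_div]

lemma th_tendsto : Tendsto th atTop (nhds 1) := by
  have h0 : Tendsto (fun x : ℝ => Real.exp (-(2*x))) atTop (nhds 0) := by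
    apply Real.tendsto_exp_atBot.comp
    have : Tendsto (fun x : ℝ => 2 * x) atTop atTop := tendsto_id.const_mul_atTop two_pos
    exact tendsto_neg_atBot_iff.mpr this
  have := ((tendsto_const_nhds (x := (1:ℝ))).sub h0).div (tendsto_const_nhds.add h0)
    (by norm_num : (1:ℝ) + 0 ≠ 0)
  rw [show (1:ℝ) = (1 - 0) / (1 + 0) by norm_num]
  exact Tendsto.congr (fun x => (th_eq_exp x).symm) this

lemma th_arctanh (x : ℝ) (h1 : -1 < x) (h2 : x < 1) : th (arctanh x) = x := by
  have hr : 0 < (1+x)/(1-x) := div_pos (by linarith) (by linarith)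
  have hx : (1:ℝ) - x ≠ 0 := by linarith
  have hexp : Real.exp (-(2 * arctanh x)) = ((1+x)/(1-x))⁻¹ := by
    rw [show -(2 * arctanh x) = - Real.log ((1+x)/(1-x)) by rw [arctanh]; ring,
      Real.exp_neg, Real.exp_log hr]
  rw [th_eq_exp, hexp]
  rw [div_eq_iff (by positivity)]
  have hx1 : (1:ℝ) + x ≠ 0 := by linarith
  field_simp
  ring

lemma cubic_hasDerivAt (ω a : ℝ) (x : ℝ) :
    HasDerivAt (cubicProfile ω a)
      (-(Real.sqrt (2*ω) * (Real.sqrt ω * Real.sinh (Real.sqrt ω * (x-a)))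
        / Real.cosh (Real.sqrt ω * (x-a)) ^ 2)) x := by
  have h1 : HasDerivAt (fun x : ℝ => Real.sqrt ω * (x - a)) (Real.sqrt ω) x := by
    simpa using ((hasDerivAt_id x).sub_const a).const_mul (Real.sqrt ω)
  have h2 := (Real.hasDerivAt_cosh (Real.sqrt ω * (x-a))).comp x h1
  have h3 := h2.inv (Real.cosh_pos _).ne'
  have h4 := h3.const_mul (Real.sqrt (2*ω))
  convert h4 using 1
  · rfl
  · rfl
  · funext y; simp [cubicProfile, one_div]
  · simp only [Function.comp]
    ring

lemma key (ω : ℝ) (hω : 0 < ω) (a : ℝ) :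
    (∫ x in Ioi (0:ℝ), ((deriv (cubicProfile ω a) x) ^ 2 / 2 - (cubicProfile ω a x) ^ 4 / 4))
    = Real.sqrt ω ^ 3 *
        (2/3 * th (Real.sqrt ω * a) ^ 3 - th (Real.sqrt ω * a) - 1/3) := by
  set s := Real.sqrt ω with hsdef
  have hs : 0 < s := Real.sqrt_pos.2 hω
  have hs2 : s ^ 2 = ω := Real.sq_sqrt hω.le
  have h2ω : Real.sqrt (2*ω) ^ 2 = 2*ω := Real.sq_sqrt (by positivity)
  set f1 : ℝ → ℝ := fun x => ω^2 * (Real.sinh (s*(x-a)))^2 / (Real.cosh (s*(x-a)))^4 with hf1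
  set f2 : ℝ → ℝ := fun x => ω^2 / (Real.cosh (s*(x-a)))^4 with hf2
  set F1 : ℝ → ℝ := fun x => ω^2/s/3 * th (s*(x-a))^3 with hF1def
  set F2 : ℝ → ℝ := fun x => ω^2/s * (th (s*(x-a)) - th (s*(x-a))^3/3) with hF2def
  have hth : ∀ x : ℝ, HasDerivAt (fun x => th (s*(x-a))) (s / Real.cosh (s*(x-a))^2) x := by
    intro x
    have h1 : HasDerivAt (fun x : ℝ => s*(x-a)) s x := by
      simpa using ((hasDerivAt_id x).sub_const a).const_mul s
    have := (th_hasDerivAt (s*(x-a))).comp x h1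
    refine this.congr_deriv ?_
    field_simp
  have hF1 : ∀ x : ℝ, HasDerivAt F1 (f1 x) x := by
    intro x
    have h := ((hth x).pow 3).const_mul (ω^2/s/3)
    refine h.congr_deriv ?_
    symm
    have hc := (Real.cosh_pos (s*(x-a))).ne'
    simp only [hf1, th]
    push_cast
    field_simp
  have hF2 : ∀ x : ℝ, HasDerivAt F2 (f2 x) x := by
    intro x
    have h := ((hth x).sub (((hth x).pow 3).div_const 3)).const_mul (ω^2/s)
    refine h.congr_deriv ?_
    symm
    have hc := (Real.cosh_pos (s*(x-a))).ne'
    have hid := Real.cosh_sq_sub_sinh_sq (s*(x-a))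
    simp only [hf2, th]
    push_cast
    field_simp
    linear_combination (-1) * hid
  have hinner : Tendsto (fun x : ℝ => s*(x-a)) atTop atTop := by
    have h1 : Tendsto (fun x : ℝ => x - a) atTop atTop :=
      tendsto_atTop_add_const_right atTop (-a) tendsto_id
    exact (tendsto_id.const_mul_atTop hs).comp h1
  have hTlim : Tendsto (fun x : ℝ => th (s*(x-a))) atTop (nhds 1) := th_tendsto.comp hinner
  have hF1lim : Tendsto F1 atTop (nhds (ω^2/s/3)) := by
    have := (hTlim.pow 3).const_mul (ω^2/s/3)
    simpa using this
  have hF2lim : Tendsto F2 atTop (nhds (ω^2/s * (2/3))) := by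
    have h := ((hTlim.sub ((hTlim.pow 3).div_const 3)).const_mul (ω^2/s))
    have he : (ω^2/s) * ((1:ℝ) - 1^3/3) = ω^2/s * (2/3) := by norm_num
    rw [he] at h
    exact h
  have hpos1 : ∀ x ∈ Ioi (0:ℝ), 0 ≤ f1 x := by
    intro x _; simp only [hf1]; positivity
  have hpos2 : ∀ x ∈ Ioi (0:ℝ), 0 ≤ f2 x := by
    intro x _
    simp only [hf2]; positivity
  have hi1 : IntegrableOn f1 (Ioi (0:ℝ)) :=
    integrableOn_Ioi_deriv_of_nonneg (hF1 0).continuousAt.continuousWithinAt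
      (fun x _ => hF1 x) hpos1 hF1lim
  have hi2 : IntegrableOn f2 (Ioi (0:ℝ)) :=
    integrableOn_Ioi_deriv_of_nonneg (hF2 0).continuousAt.continuousWithinAt
      (fun x _ => hF2 x) hpos2 hF2lim
  have hI1 : ∫ x in Ioi (0:ℝ), f1 x = ω^2/s/3 - F1 0 :=
    integral_Ioi_of_hasDerivAt_of_tendsto' (fun x _ => hF1 x) hi1 hF1lim
  have hI2 : ∫ x in Ioi (0:ℝ), f2 x = ω^2/s * (2/3) - F2 0 :=
    integral_Ioi_of_hasDerivAt_of_tendsto' (fun x _ => hF2 x) hi2 hF2lim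
  have hptwise : ∀ x : ℝ, (deriv (cubicProfile ω a) x) ^ 2 / 2 - (cubicProfile ω a x) ^ 4 / 4
      = f1 x - f2 x := by
    intro x
    rw [(cubic_hasDerivAt ω a x).deriv]
    have hc := (Real.cosh_pos (Real.sqrt ω * (x-a))).ne'
    simp only [hf1, hf2, cubicProfile, ← hsdef]
    have hA : (-(Real.sqrt (2*ω) * (s * Real.sinh (s*(x-a))) / Real.cosh (s*(x-a))^2))^2/2
        - (Real.sqrt (2*ω) * (1 / Real.cosh (s*(x-a))))^4/4
        = Real.sqrt (2*ω)^2 * s^2 * Real.sinh (s*(x-a))^2 / (2*Real.cosh (s*(x-a))^4)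
          - (Real.sqrt (2*ω)^2)^2/(4*Real.cosh (s*(x-a))^4) := by
      field_simp
    rw [hA, h2ω, hs2]
    field_simp
    ring
  calc ∫ x in Ioi (0:ℝ), ((deriv (cubicProfile ω a) x) ^ 2 / 2 - (cubicProfile ω a x) ^ 4 / 4)
      = ∫ x in Ioi (0:ℝ), (f1 x - f2 x) := by
        exact integral_congr_ae (Filter.Eventually.of_forall (fun x => hptwise x))
    _ = (∫ x in Ioi (0:ℝ), f1 x) - ∫ x in Ioi (0:ℝ), f2 x := integral_sub hi1 hi2
    _ = Real.sqrt ω ^ 3 * (2/3 * th (Real.sqrt ω * a) ^ 3 - th (Real.sqrt ω * a) - 1/3) := by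
        rw [hI1, hI2]
        simp only [hF1def, hF2def]
        have hz : s * ((0:ℝ) - a) = -(s * a) := by ring
        rw [hz, th_neg]
        rw [← hs2]
        field_simp
        rw [Real.sqrt_sq hs.le, mul_comm a s]
        ring

theorem stmt_7 (α : ℝ) (hα : α ≠ 0) (N : ℕ) (hN : 0 < N)
    (j : ℕ) (hj : j ≤ N) (hjN : 2 * j ≠ N)
    (hsign : (0 < α ∧ (N : ℤ) < 2 * j) ∨ (α < 0 ∧ (2 * j : ℤ) < N))
    (ω : ℝ) (hω : ω > α ^ 2 / (2 * (j : ℝ) - N) ^ 2)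
    (aj : ℝ) (haj : aj = 1 / Real.sqrt ω * arctanh (α / ((2 * (j : ℝ) - N) * Real.sqrt ω))) :
    -- the energy of the stationary state `Ψʲ_ω` (j bumps, N − j tails) of the cubic NLS
    -- with delta vertex of strength `α` equals `−(N/3)ω^{3/2} − α³/(3(2j−N)²)`
    (j : ℝ) * (∫ x in Ioi (0 : ℝ),
        ((deriv (cubicProfile ω aj) x) ^ 2 / 2 - (cubicProfile ω aj x) ^ 4 / 4))
      + ((N : ℝ) - j) * (∫ x in Ioi (0 : ℝ),
        ((deriv (cubicProfile ω (-aj)) x) ^ 2 / 2 - (cubicProfile ω (-aj) x) ^ 4 / 4))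
      + α / 2 * (cubicProfile ω aj 0) ^ 2
      = -((N : ℝ) / 3) * ω ^ ((3 : ℝ) / 2) - α ^ 3 / (3 * (2 * (j : ℝ) - N) ^ 2) := by
  have hc : (2 * (j:ℝ) - N) ≠ 0 := by
    intro h
    apply hjN
    have : (2 * (j:ℝ)) = N := by linarith
    exact_mod_cast this
  have hc2 : (0:ℝ) < (2 * (j:ℝ) - N)^2 := by positivity
  have hω0 : 0 < ω := lt_of_le_of_lt (by positivity) hω
  set s := Real.sqrt ω with hsdef
  have hs : 0 < s := Real.sqrt_pos.2 hω0
  have hs2 : s ^ 2 = ω := Real.sq_sqrt hω0.le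
  set β := α / ((2 * (j:ℝ) - N) * s) with hβdef
  have hβsq : β^2 < 1 := by
    have h1 : β^2 = α^2 / ((2 * (j:ℝ) - N)^2 * ω) := by
      rw [hβdef]; rw [div_pow, mul_pow, hs2]
    rw [h1, div_lt_one (by positivity)]
    calc α^2 = (α^2 / (2 * (j:ℝ) - N)^2) * (2 * (j:ℝ) - N)^2 := by field_simp
    _ < ω * (2 * (j:ℝ) - N)^2 := by apply mul_lt_mul_of_pos_right hω hc2
    _ = (2 * (j:ℝ) - N)^2 * ω := by ring
  have hβ1 : -1 < β := by nlinarith [sq_nonneg (β+1)]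
  have hβ2 : β < 1 := by nlinarith [sq_nonneg (β-1)]
  have hsaj : s * aj = arctanh β := by
    rw [haj]; field_simp
  have hthβ : th (s * aj) = β := by rw [hsaj]; exact th_arctanh β hβ1 hβ2
  have hk1 := key ω hω0 aj
  have hk2 := key ω hω0 (-aj)
  rw [← hsdef] at hk1 hk2
  rw [show s * -aj = -(s * aj) by ring, th_neg, hthβ] at hk2
  rw [hthβ] at hk1
  have hvertex : (cubicProfile ω aj 0) ^ 2 = 2 * ω * (1 - β^2) := by
    have hc0 := (Real.cosh_pos (s * ((0:ℝ) - aj))).ne'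
    have h2ω : Real.sqrt (2*ω) ^ 2 = 2*ω := Real.sq_sqrt (by positivity)
    have hid := Real.cosh_sq_sub_sinh_sq (s * aj)
    simp only [cubicProfile, ← hsdef]
    rw [show s * ((0:ℝ) - aj) = -(s*aj) by ring, Real.cosh_neg]
    rw [mul_pow, h2ω, ← hthβ]
    simp only [th]
    have hcc := (Real.cosh_pos (s * aj)).ne'
    field_simp
    exact hid.symm

  rw [hk1, hk2, hvertex]
  have hrpow : ω ^ ((3:ℝ)/2) = s ^ 3 := by
    rw [show ((3:ℝ)/2) = (1/2) * ((3:ℕ):ℝ) by norm_num, Real.rpow_mul hω0.le,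
      ← Real.sqrt_eq_rpow, Real.rpow_natCast]
  rw [hrpow, hβdef, ← hs2]
  set d := (2 * (j:ℝ) - N) with hd
  field_simp
  ring
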